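/- A connected cubic graph has a spanning tree all of whose cotree components have an even number of edges if and only if its vertex set can be partitioned into sets A and J such that A induces a tree and J is an independent set. -/

import Mathlib

open SimpleGraph Finset

/-- The set of edges of `H` lying in the connected component `c` of `H`. -/
def cotreeCompEdges {V : Type*} (H : SimpleGraph V) (c : H.ConnectedComponent) :
    Set (Sym2 V) :=
  {e | e ∈ H.edgeSet ∧ ∀ v ∈ e, H.connectedComponentMk v = c}

set_option linter.unusedSectionVars false
set_option maxHeartbeats 1000000
namespace CubicAux

open scoped Classical

variable {V : Type*} [Fintype V] [DecidableEq V]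

/-- The edges of `H` lying in the connected component of `x`, as a `Finset`. -/
noncomputable def compEdges (H : SimpleGraph V) (x : V) : Finset (Sym2 V) :=
  Finset.univ.filter (fun e => e ∈ H.edgeSet ∧ ∀ v ∈ e, H.Reachable x v)

lemma mem_compEdges {H : SimpleGraph V} {x : V} {e : Sym2 V} :
    e ∈ compEdges H x ↔ e ∈ H.edgeSet ∧ ∀ v ∈ e, H.Reachable x v := by
  simp [compEdges]

lemma cotreeCompEdges_eq (H : SimpleGraph V) (x : V) :
    cotreeCompEdges H (H.connectedComponentMk x) = ↑(compEdges H x) := by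
  ext e
  simp only [cotreeCompEdges, Set.mem_setOf_eq, Finset.coe_filter, compEdges,
    Finset.mem_univ, true_and, ConnectedComponent.eq]
  exact and_congr_right fun _ => forall₂_congr fun v _ => ⟨fun h => h.symm, fun h => h.symm⟩

lemma even_iff_even (H : SimpleGraph V) :
    (∀ c : H.ConnectedComponent, Even ((cotreeCompEdges H c).ncard)) ↔
      ∀ x : V, Even (compEdges H x).card := by
  constructor
  · intro h x
    have := h (H.connectedComponentMk x)
    rwa [cotreeCompEdges_eq, Set.ncard_coe_finset] at this
  · intro h c
    induction c using SimpleGraph.ConnectedComponent.ind with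
    | _ x => rw [cotreeCompEdges_eq, Set.ncard_coe_finset]; exact h x

/-- An endpoint of an edge together with its mate. -/
lemma exists_other {H : SimpleGraph V} {e : Sym2 V} {z : V}
    (he : e ∈ H.edgeSet) (hz : z ∈ e) : ∃ y, H.Adj z y ∧ e = s(z, y) := by
  induction e with
  | _ a b =>
    rw [Sym2.mem_iff] at hz
    rw [mem_edgeSet] at he
    rcases hz with rfl | rfl
    · exact ⟨b, he, rfl⟩
    · exact ⟨a, he.symm, Sym2.eq_swap⟩

/-- An interior vertex of a path has degree at least 2. -/
lemma two_le_degree_of_internal {H : SimpleGraph V} [DecidableRel H.Adj] :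
    ∀ {u v : V} (p : H.Walk u v), p.IsPath → ∀ z ∈ p.support, z ≠ u → z ≠ v →
      2 ≤ H.degree z := by
  intro u v p
  induction p with
  | nil =>
    intro _ z hz hzu _
    rw [Walk.support_nil, List.mem_singleton] at hz
    exact absurd hz hzu
  | @cons u b v h q ih =>
    intro hp z hz hzu hzv
    rw [Walk.support_cons, List.mem_cons] at hz
    rcases hz with rfl | hz
    · exact absurd rfl hzu
    · rw [Walk.cons_isPath_iff] at hp
      by_cases hzb : z = b
      · subst hzb
        cases q with
        | nil => exact absurd rfl hzv
        | @cons _ c _ h' q' =>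
          have hc : c ∈ (Walk.cons h' q').support := by
            rw [Walk.support_cons]; exact List.mem_cons_of_mem _ q'.start_mem_support
          have huc : u ≠ c := fun e => hp.2 (e ▸ hc)
          have hsub : ({u, c} : Finset V) ⊆ H.neighborFinset z := by
            intro t ht
            rw [Finset.mem_insert, Finset.mem_singleton] at ht
            rw [mem_neighborFinset]
            rcases ht with rfl | rfl
            · exact h.symm
            · exact h'
          calc 2 = ({u, c} : Finset V).card := (Finset.card_pair huc).symm
          _ ≤ _ := Finset.card_le_card hsub
      · exact ih hp.1 z hz hzb hzv

/-- Every vertex of a cycle has degree at least 2. -/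
lemma two_le_degree_of_mem_cycle {H : SimpleGraph V} [DecidableRel H.Adj] {v : V}
    {c : H.Walk v v} (hc : c.IsCycle) {z : V} (hz : z ∈ c.support) :
    2 ≤ H.degree z := by
  have hc' : (c.rotate z hz).IsCycle := hc.rotate hz
  generalize c.rotate z hz = w at hc'
  clear hc hz c v
  cases w with
  | nil => exact absurd rfl hc'.ne_nil
  | @cons _ b _ h q =>
    -- q : H.Walk b z, first edge s(z,b)
    have hq : q.reverse.length = q.length := q.length_reverse
    have h3 : 3 ≤ (Walk.cons h q).length := hc'.three_le_length
    rw [Walk.length_cons] at h3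
    cases hqr : q.reverse with
    | nil =>
      have : q.length = 0 := by
        rw [← hq, hqr]; rfl
      omega
    | @cons _ d _ h2 q2 =>
      -- h2 : H.Adj z d
      have hd_mem : s(z, d) ∈ q.edges := by
        have : s(z, d) ∈ q.reverse.edges := by
          rw [hqr, Walk.edges_cons]; exact List.mem_cons_self
        rwa [Walk.edges_reverse, List.mem_reverse] at this
      have hbd : b ≠ d := by
        rintro rfl
        have : s(z, b) ∉ q.edges := by
          have := hc'.edges_nodup
          rw [Walk.edges_cons] at this
          exact (List.nodup_cons.mp this).1
        exact this hd_mem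
      have hsub : ({b, d} : Finset V) ⊆ H.neighborFinset z := by
        intro t ht
        rw [Finset.mem_insert, Finset.mem_singleton] at ht
        rw [mem_neighborFinset]
        rcases ht with rfl | rfl
        · exact h
        · exact h2
      calc 2 = ({b, d} : Finset V).card := (Finset.card_pair hbd).symm
      _ ≤ _ := Finset.card_le_card hsub

/-- Handshake for a set closed under adjacency. -/
lemma even_sum_degree_closed {H : SimpleGraph V} [DecidableRel H.Adj] {S : Finset V}
    (hS : ∀ a ∈ S, ∀ b, H.Adj a b → b ∈ S) :
    Even (∑ a ∈ S, H.degree a) := by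
  classical
  set HS : SimpleGraph V :=
    { Adj := fun x y => H.Adj x y ∧ x ∈ S ∧ y ∈ S
      symm := ⟨fun x y ⟨hxy, hx, hy⟩ => ⟨hxy.symm, hy, hx⟩⟩
      loopless := ⟨fun x ⟨hxx, _, _⟩ => H.irrefl hxx⟩ } with hHS
  have hdeg : ∀ a ∈ S, HS.degree a = H.degree a := by
    intro a ha
    unfold SimpleGraph.degree
    congr 1
    ext t
    simp only [mem_neighborFinset, hHS]
    exact ⟨fun h => h.1, fun h => ⟨h, ha, hS a ha t h⟩⟩
  have hdeg0 : ∀ a, a ∉ S → HS.degree a = 0 := by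
    intro a ha
    rw [← Finset.card_empty]
    unfold SimpleGraph.degree
    congr 1
    ext t
    simp only [mem_neighborFinset, hHS, Finset.notMem_empty, iff_false]
    rintro ⟨_, h, _⟩
    exact ha h
  have := HS.sum_degrees_eq_twice_card_edges
  have hsum : ∑ a ∈ S, H.degree a = ∑ v, HS.degree v := by
    rw [← Finset.sum_subset (Finset.subset_univ S)]
    · exact Finset.sum_congr rfl fun a ha => (hdeg a ha).symm
    · intro a _ ha
      exact hdeg0 a ha
  rw [hsum, this]
  exact even_two_mul _

/-- The valuation homomorphism from an induced subgraph. -/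
def inducedHom (G : SimpleGraph V) (s : Set V) : G.induce s →g G where
  toFun := Subtype.val
  map_rel' := fun h => h

/-- Lift a walk whose support lies in `s` to the induced subgraph on `s`. -/
lemma exists_lift_walk {G : SimpleGraph V} {s : Set V} :
    ∀ {x y : V} (p : G.Walk x y) (_ : ∀ z ∈ p.support, z ∈ s) (hx : x ∈ s) (hy : y ∈ s),
      ∃ q : (G.induce s).Walk ⟨x, hx⟩ ⟨y, hy⟩, q.map (inducedHom G s) = p := by
  intro x y p
  induction p with
  | nil =>
    intro _ hx hy
    exact ⟨Walk.nil.copy rfl (by rfl), by simp [Walk.map_copy]; rfl⟩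
  | @cons u b v h q ih =>
    intro hsup hx hy
    have hb : b ∈ s := by
      apply hsup
      rw [Walk.support_cons]
      exact List.mem_cons_of_mem _ q.start_mem_support
    have hq : ∀ z ∈ q.support, z ∈ s := by
      intro z hz
      apply hsup
      rw [Walk.support_cons]
      exact List.mem_cons_of_mem _ hz
    obtain ⟨q', hq'⟩ := ih hq hb hy
    refine ⟨Walk.cons (by exact h : (G.induce s).Adj ⟨u, hx⟩ ⟨b, hb⟩) q', ?_⟩
    exact congrArg (Walk.cons h) hq'

lemma mem_support_of_mem_edges' {H : SimpleGraph V} {u v z : V} {e : Sym2 V}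
    (p : H.Walk u v) (he : e ∈ p.edges) (hz : z ∈ e) : z ∈ p.support := by
  induction e with
  | _ a b =>
    rcases Sym2.mem_iff.mp hz with rfl | rfl
    · exact p.fst_mem_support_of_mem_edges he
    · exact p.snd_mem_support_of_mem_edges he

/-- From an independent "exact cover" the component edge counts are even. -/
lemma even_of_cover {H : SimpleGraph V} [DecidableRel H.Adj] {J : Finset V}
    (hdeg : ∀ j ∈ J, H.degree j = 2)
    (hxor : ∀ x y, H.Adj x y → (x ∈ J ↔ y ∉ J)) :
    ∀ x, Even (compEdges H x).card := by
  classical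
  intro x
  have key : compEdges H x =
      (J.filter (fun j => H.Reachable x j)).biUnion (fun j => H.incidenceFinset j) := by
    ext e
    induction e with
    | _ a b =>
      simp only [Finset.mem_biUnion, Finset.mem_filter, mem_compEdges, mem_incidenceFinset,
        mk'_mem_incidenceSet_iff]
      constructor
      · rintro ⟨he, hall⟩
        have hadj : H.Adj a b := he
        have hxab := hxor a b hadj
        by_cases haJ : a ∈ J
        · exact ⟨a, ⟨haJ, hall a (Sym2.mem_mk_left a b)⟩, hadj, Or.inl rfl⟩
        · have hbJ : b ∈ J := by
            by_contra hbJ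
            exact haJ (hxab.mpr hbJ)
          exact ⟨b, ⟨hbJ, hall b (Sym2.mem_mk_right a b)⟩, hadj, Or.inr rfl⟩
      · rintro ⟨j, ⟨hjJ, hjr⟩, hadj, hj⟩
        refine ⟨hadj, ?_⟩
        intro v hv
        rcases Sym2.mem_iff.mp hv with rfl | rfl
        · rcases hj with rfl | rfl
          · exact hjr
          · exact hjr.trans hadj.symm.reachable
        · rcases hj with rfl | rfl
          · exact hjr.trans hadj.reachable
          · exact hjr
  rw [key, Finset.card_biUnion]
  · have : ∀ j ∈ J.filter (fun j => H.Reachable x j), (H.incidenceFinset j).card = 2 := by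
      intro j hj
      rw [card_incidenceFinset_eq_degree]
      exact hdeg j (Finset.mem_filter.mp hj).1
    rw [Finset.sum_congr rfl this, Finset.sum_const, smul_eq_mul]
    exact even_two.mul_left _
  · intro j1 h1 j2 h2 hne
    simp only [Finset.mem_coe] at h1 h2
    rw [Function.onFun, Finset.disjoint_left]
    intro e he1 he2
    rw [mem_incidenceFinset] at he1 he2
    obtain ⟨y, hy, hey⟩ := exists_other he1.1 he1.2
    have hj2 : j2 = y := by
      have := he2.2
      rw [hey, Sym2.mem_iff] at this
      rcases this with h | h
      · exact absurd h.symm hne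
      · exact h
    subst hj2
    have := hxor j1 j2 hy
    have h1J := (Finset.mem_filter.mp h1).1
    have h2J := (Finset.mem_filter.mp h2).1
    exact (this.mp h1J) h2J

/-- If `x` is isolated then reachability from `x` is trivial. -/
lemma reachable_isolated {H : SimpleGraph V} {x y : V}
    (h : ∀ z, ¬ H.Adj x z) (hr : H.Reachable x y) : y = x := by
  obtain ⟨p⟩ := hr
  cases p with
  | nil => rfl
  | cons hadj q => exact absurd hadj (h _)

lemma compEdges_isolated {H : SimpleGraph V} {x : V}
    (h : ∀ z, ¬ H.Adj x z) : compEdges H x = ∅ := by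
  ext e
  induction e with
  | _ a b =>
    simp only [mem_compEdges, Finset.notMem_empty, iff_false, not_and]
    intro he hall
    have ha : a = x := reachable_isolated h (hall a (Sym2.mem_mk_left a b))
    have hb : b = x := reachable_isolated h (hall b (Sym2.mem_mk_right a b))
    rw [mem_edgeSet] at he
    subst ha; subst hb
    exact H.irrefl he

/-- Deleting edges all meeting a vertex not reachable from `x` does not change
the edges in the component of `x`. -/
lemma compEdges_deleteEdges_of_not_reachable {H : SimpleGraph V} {s : Set (Sym2 V)}
    {x v₀ : V} (hs : ∀ e ∈ s, v₀ ∈ e) (hx : ¬ H.Reachable x v₀) :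
    compEdges (H.deleteEdges s) x = compEdges H x := by
  ext e
  simp only [mem_compEdges, edgeSet_deleteEdges, Set.mem_diff]
  constructor
  · rintro ⟨⟨he, _⟩, hall⟩
    exact ⟨he, fun v hv => (hall v hv).mono (H.deleteEdges_le s)⟩
  · rintro ⟨he, hall⟩
    have hes : e ∉ s := fun hesmem => hx (hall v₀ (hs e hesmem))
    refine ⟨⟨he, hes⟩, fun v hv => ?_⟩
    obtain ⟨p⟩ := hall v hv
    refine ⟨p.toDeleteEdges s fun e' he' => ?_⟩
    intro hmem
    exact hx ⟨p.takeUntil v₀ (mem_support_of_mem_edges' p he' (hs e' hmem))⟩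


lemma degree_le_of_le {H1 H2 : SimpleGraph V} (h : H1 ≤ H2) (z : V) :
    H1.degree z ≤ H2.degree z := by
  classical
  apply Finset.card_le_card
  intro t ht
  rw [mem_neighborFinset] at ht ⊢
  exact h ht

lemma one_le_degree_of_reachable {H : SimpleGraph V} {a b : V}
    (h : H.Reachable a b) (hne : a ≠ b) : 1 ≤ H.degree a := by
  classical
  obtain ⟨p⟩ := h
  cases p with
  | nil => exact absurd rfl hne
  | cons hadj q =>
    apply Finset.card_pos.mpr
    exact ⟨_, (mem_neighborFinset _ _ _).mpr hadj⟩

/-- Reachability from an endpoint of a pendant edge whose other end is also pendant. -/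
lemma reach_pendant {H : SimpleGraph V} {u v : V}
    (hu : H.neighborFinset u = {v}) (hv : H.neighborFinset v = {u}) :
    ∀ z, H.Reachable u z → z = u ∨ z = v := by
  classical
  intro z hr
  obtain ⟨p0⟩ := hr
  obtain ⟨p, hp⟩ := p0.toPath
  cases p with
  | nil => exact Or.inl rfl
  | @cons _ b _ h q =>
    have hb : b = v := by
      have : b ∈ H.neighborFinset u := (mem_neighborFinset _ _ _).mpr h
      rwa [hu, Finset.mem_singleton] at this
    cases q with
    | nil => exact Or.inr hb
    | @cons _ c _ h' q' =>
      have hc : c = u := by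
        have : c ∈ H.neighborFinset b := (mem_neighborFinset _ _ _).mpr h'
        rwa [hb, hv, Finset.mem_singleton] at this
      subst hc
      rw [Walk.cons_isPath_iff] at hp
      exact absurd (by
        rw [Walk.support_cons]
        exact List.mem_cons_of_mem _ q'.start_mem_support) hp.2

/-- The second neighbour of a degree-2 vertex. -/
lemma exists_other_nbr {H : SimpleGraph V} {v u : V}
    (hdeg : H.degree v = 2) (hadj : H.Adj v u) :
    ∃ w, w ≠ u ∧ H.Adj v w ∧ ∀ z, H.Adj v z → z = u ∨ z = w := by
  classical
  have hcard : (H.neighborFinset v).card = 2 := hdeg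
  rw [Finset.card_eq_two] at hcard
  obtain ⟨a, b, hab, hset⟩ := hcard
  have hu : u ∈ H.neighborFinset v := (mem_neighborFinset _ _ _).mpr hadj
  rw [hset, Finset.mem_insert, Finset.mem_singleton] at hu
  rcases hu with rfl | rfl
  · refine ⟨b, fun e => hab e.symm, ?_, ?_⟩
    · rw [← mem_neighborFinset, hset]
      simp
    · intro z hz
      have : z ∈ H.neighborFinset v := (mem_neighborFinset _ _ _).mpr hz
      rw [hset, Finset.mem_insert, Finset.mem_singleton] at this
      tauto
  · refine ⟨a, fun e => hab e, ?_, ?_⟩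
    · rw [← mem_neighborFinset, hset]
      simp
    · intro z hz
      have : z ∈ H.neighborFinset v := (mem_neighborFinset _ _ _).mpr hz
      rw [hset, Finset.mem_insert, Finset.mem_singleton] at this
      tauto

lemma isolated_of_edges_deleted {H : SimpleGraph V} {s : Set (Sym2 V)} {z : V}
    (h : ∀ t, H.Adj z t → s(z, t) ∈ s) : ∀ t, ¬ (H.deleteEdges s).Adj z t := by
  intro t ht
  rw [deleteEdges_adj] at ht
  exact ht.2 (h t ht.1)

lemma reach_deleteEdges_of_avoid {H : SimpleGraph V} {s : Set (Sym2 V)} {v a b : V}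
    (hs : ∀ e ∈ s, v ∈ e) (q : H.Walk a b) (hq : v ∉ q.support) :
    (H.deleteEdges s).Reachable a b := by
  refine ⟨q.toDeleteEdges s fun e' he' => ?_⟩
  intro hmem
  exact hq (mem_support_of_mem_edges' q he' (hs e' hmem))

/-- Split a path through `v` at `v`, producing a neighbour of `v` together with a
path to the start avoiding `v`. -/
lemma exists_attach {H : SimpleGraph V} {v x y : V} (p : H.Walk x y) (hp : p.IsPath)
    (hv : v ∈ p.support) (hxv : x ≠ v) :
    ∃ z, H.Adj v z ∧ ∃ q : H.Walk z x, q.IsPath ∧ v ∉ q.support := by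
  classical
  have h2 : ((p.takeUntil v hv).reverse).IsPath := (hp.takeUntil hv).reverse
  generalize (p.takeUntil v hv).reverse = q0 at h2
  cases q0 with
  | nil => exact absurd rfl hxv.symm
  | cons h r =>
    rw [Walk.cons_isPath_iff] at h2
    exact ⟨_, h, r, h2.1, h2.2⟩


section Surgery

variable {H : SimpleGraph V} {v u w : V}

lemma pair_mem_v : ∀ e ∈ ({s(v,u), s(v,w)} : Set (Sym2 V)), v ∈ e := by
  rintro e (rfl | rfl) <;> simp

lemma pair_ne (huw : u ≠ w) : s(v,u) ≠ s(v,w) := by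
  intro h
  rw [Sym2.eq_iff] at h
  rcases h with ⟨_, h2⟩ | ⟨h1, h2⟩
  · exact huw h2
  · exact huw (h2.trans h1)

lemma surgery_v_isolated (hnbrv : ∀ z, H.Adj v z → z = u ∨ z = w) :
    ∀ t, ¬ (H.deleteEdges {s(v,u), s(v,w)}).Adj v t :=
  isolated_of_edges_deleted fun t ht => by
    rcases hnbrv t ht with rfl | rfl
    · exact Set.mem_insert _ _
    · exact Set.mem_insert_of_mem _ rfl

lemma surgery_nbrF_other {z : V} (hz : z ≠ v) (hzu : z ≠ u) (hzw : z ≠ w) :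
    (H.deleteEdges {s(v,u), s(v,w)}).neighborFinset z = H.neighborFinset z := by
  ext t
  simp only [mem_neighborFinset, deleteEdges_adj, Set.mem_insert_iff, Set.mem_singleton_iff]
  refine ⟨fun h => h.1, fun h => ⟨h, ?_⟩⟩
  rintro (he | he) <;> rw [Sym2.eq_iff] at he
  · rcases he with ⟨h1, _⟩ | ⟨h1, _⟩
    · exact hz h1
    · exact hzu h1
  · rcases he with ⟨h1, _⟩ | ⟨h1, _⟩
    · exact hz h1
    · exact hzw h1

lemma surgery_nbrF_u (hvu : v ≠ u) (huw : u ≠ w) :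
    (H.deleteEdges {s(v,u), s(v,w)}).neighborFinset u = (H.neighborFinset u).erase v := by
  ext t
  simp only [mem_neighborFinset, deleteEdges_adj, Set.mem_insert_iff, Set.mem_singleton_iff,
    Finset.mem_erase]
  constructor
  · rintro ⟨h, hns⟩
    refine ⟨?_, h⟩
    rintro rfl
    exact hns (Or.inl Sym2.eq_swap)
  · rintro ⟨htv, h⟩
    refine ⟨h, ?_⟩
    rintro (he | he) <;> rw [Sym2.eq_iff] at he
    · rcases he with ⟨h1, _⟩ | ⟨_, h2⟩
      · exact hvu h1.symm
      · exact htv h2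
    · rcases he with ⟨h1, _⟩ | ⟨h1, _⟩
      · exact hvu h1.symm
      · exact huw h1

lemma surgery_nbrF_w (hvw : v ≠ w) (huw : u ≠ w) :
    (H.deleteEdges {s(v,u), s(v,w)}).neighborFinset w = (H.neighborFinset w).erase v := by
  ext t
  simp only [mem_neighborFinset, deleteEdges_adj, Set.mem_insert_iff, Set.mem_singleton_iff,
    Finset.mem_erase]
  constructor
  · rintro ⟨h, hns⟩
    refine ⟨?_, h⟩
    rintro rfl
    exact hns (Or.inr Sym2.eq_swap)
  · rintro ⟨htv, h⟩
    refine ⟨h, ?_⟩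
    rintro (he | he) <;> rw [Sym2.eq_iff] at he
    · rcases he with ⟨h1, _⟩ | ⟨h1, _⟩
      · exact hvw h1.symm
      · exact huw h1.symm
    · rcases he with ⟨h1, _⟩ | ⟨_, h2⟩
      · exact hvw h1.symm
      · exact htv h2

lemma surgery_edgeFinset (hadj_u : H.Adj v u) (hadj_w : H.Adj v w) :
    (H.deleteEdges {s(v,u), s(v,w)}).edgeFinset
      = H.edgeFinset \ ({s(v,u), s(v,w)} : Finset (Sym2 V)) := by
  ext e
  rw [mem_edgeFinset, Finset.mem_sdiff, mem_edgeFinset, edgeSet_deleteEdges, Set.mem_diff]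
  simp

lemma surgery_card (hadj_u : H.Adj v u) (hadj_w : H.Adj v w) (huw : u ≠ w) :
    (H.deleteEdges {s(v,u), s(v,w)}).edgeFinset.card + 2 = H.edgeFinset.card := by
  classical
  have hsub : ({s(v,u), s(v,w)} : Finset (Sym2 V)) ⊆ H.edgeFinset := by
    intro e he
    rw [Finset.mem_insert, Finset.mem_singleton] at he
    rcases he with rfl | rfl
    · exact mem_edgeFinset.mpr hadj_u
    · exact mem_edgeFinset.mpr hadj_w
  have h2 : ({s(v,u), s(v,w)} : Finset (Sym2 V)).card = 2 := Finset.card_pair (pair_ne huw)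
  rw [surgery_edgeFinset hadj_u hadj_w, Finset.card_sdiff_of_subset hsub, h2]
  have := Finset.card_le_card hsub
  omega

lemma surgery_reach (huw : u ≠ w) (hnbrv : ∀ z, H.Adj v z → z = u ∨ z = w)
    {Bad : Finset V} (hvB : v ∈ Bad)
    (hside : (H.deleteEdges {s(v,u), s(v,w)}).Reachable u w ∨
      (u ∈ Bad ∧ ∀ t, H.Adj u t → t = v)) :
    ∀ x y, x ∉ Bad → y ∉ Bad → H.Reachable x y →
      (H.deleteEdges {s(v,u), s(v,w)}).Reachable x y := by
  classical
  intro x y hxB hyB hr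
  obtain ⟨p0⟩ := hr
  obtain ⟨p, hp⟩ := p0.toPath
  by_cases hv : v ∈ p.support
  · have hxv : x ≠ v := fun e => hxB (e ▸ hvB)
    have hyv : y ≠ v := fun e => hyB (e ▸ hvB)
    obtain ⟨z, hz, q, hq, hqv⟩ := exists_attach p hp hv hxv
    obtain ⟨z', hz', q', hq', hqv'⟩ := exists_attach p.reverse hp.reverse
      (by rwa [Walk.support_reverse, List.mem_reverse]) hyv
    have r1 : (H.deleteEdges {s(v,u), s(v,w)}).Reachable z x :=
      reach_deleteEdges_of_avoid pair_mem_v q hqv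
    have r2 : (H.deleteEdges {s(v,u), s(v,w)}).Reachable z' y :=
      reach_deleteEdges_of_avoid pair_mem_v q' hqv'
    have hzu : ∀ (x₀ z₀ : V) (q₀ : H.Walk z₀ x₀), v ∉ q₀.support → x₀ ∉ Bad →
        (u ∈ Bad ∧ ∀ t, H.Adj u t → t = v) → z₀ ≠ u := by
      rintro x₀ z₀ q₀ hq₀ hxB' ⟨huB, hu1⟩ rfl
      cases q₀ with
      | nil => exact hxB' huB
      | @cons _ b _ h r =>
        have hb : b = v := hu1 _ h
        apply hq₀
        rw [Walk.support_cons]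
        exact List.mem_cons_of_mem _ (hb ▸ r.start_mem_support)
    have hjoin : (H.deleteEdges {s(v,u), s(v,w)}).Reachable z z' := by
      rcases hnbrv z hz with rfl | rfl <;> rcases hnbrv z' hz' with rfl | rfl
      · exact Reachable.refl _
      · rcases hside with hbc | hcase
        · exact hbc
        · exact absurd rfl (hzu _ _ q hqv hxB hcase)
      · rcases hside with hbc | hcase
        · exact hbc.symm
        · exact absurd rfl (hzu _ _ q' hqv' hyB hcase)
      · exact Reachable.refl _
    exact (r1.symm.trans hjoin).trans r2
  · exact reach_deleteEdges_of_avoid pair_mem_v p hv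

lemma surgery_compEdges (huw : u ≠ w) (hadj_u : H.Adj v u) (hadj_w : H.Adj v w)
    (hnbrv : ∀ z, H.Adj v z → z = u ∨ z = w)
    {Bad : Finset V} (hvB : v ∈ Bad)
    (hBadedge : ∀ z ∈ Bad, ∀ t, H.Adj z t → s(z,t) ∈ ({s(v,u), s(v,w)} : Set (Sym2 V)))
    (hside : (H.deleteEdges {s(v,u), s(v,w)}).Reachable u w ∨
      (u ∈ Bad ∧ ∀ t, H.Adj u t → t = v))
    {x : V} (hxB : x ∉ Bad) :
    compEdges (H.deleteEdges {s(v,u), s(v,w)}) x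
      = compEdges H x \ ({s(v,u), s(v,w)} : Finset (Sym2 V)) := by
  classical
  ext e
  simp only [mem_compEdges, Finset.mem_sdiff, edgeSet_deleteEdges, Set.mem_diff,
    Finset.mem_insert, Finset.mem_singleton, Set.mem_insert_iff, Set.mem_singleton_iff]
  constructor
  · rintro ⟨⟨he, hes⟩, hall⟩
    exact ⟨⟨he, fun t ht => (hall t ht).mono (H.deleteEdges_le _)⟩, hes⟩
  · rintro ⟨⟨he, hall⟩, hepair⟩
    refine ⟨⟨he, hepair⟩, ?_⟩
    intro t ht
    have htB : t ∉ Bad := by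
      intro htB
      obtain ⟨y, hy, hey⟩ := exists_other he ht
      have := hBadedge t htB y hy
      rw [← hey] at this
      exact hepair (by simpa using this)
    exact surgery_reach huw hnbrv hvB hside x t hxB htB (hall t ht)

lemma surgery_even (huw : u ≠ w) (hadj_u : H.Adj v u) (hadj_w : H.Adj v w)
    (hnbrv : ∀ z, H.Adj v z → z = u ∨ z = w)
    {Bad : Finset V} (hvB : v ∈ Bad)
    (hBadedge : ∀ z ∈ Bad, ∀ t, H.Adj z t → s(z,t) ∈ ({s(v,u), s(v,w)} : Set (Sym2 V)))
    (hside : (H.deleteEdges {s(v,u), s(v,w)}).Reachable u w ∨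
      (u ∈ Bad ∧ ∀ t, H.Adj u t → t = v))
    (heven : ∀ x, Even (compEdges H x).card) :
    ∀ x, Even (compEdges (H.deleteEdges {s(v,u), s(v,w)}) x).card := by
  classical
  intro x
  by_cases hxB : x ∈ Bad
  · rw [compEdges_isolated (isolated_of_edges_deleted (fun t ht => hBadedge x hxB t ht))]
    simp
  · by_cases hxv : H.Reachable x v
    · rw [surgery_compEdges huw hadj_u hadj_w hnbrv hvB hBadedge hside hxB]
      have hsub : ({s(v,u), s(v,w)} : Finset (Sym2 V)) ⊆ compEdges H x := by
        intro e he
        rw [Finset.mem_insert, Finset.mem_singleton] at he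
        have h1 : H.Reachable x u := hxv.trans hadj_u.reachable
        have h2 : H.Reachable x w := hxv.trans hadj_w.reachable
        rcases he with rfl | rfl <;> rw [mem_compEdges]
        · refine ⟨(mem_edgeSet _).mpr hadj_u, ?_⟩
          intro t ht
          rcases Sym2.mem_iff.mp ht with rfl | rfl
          exacts [hxv, h1]
        · refine ⟨(mem_edgeSet _).mpr hadj_w, ?_⟩
          intro t ht
          rcases Sym2.mem_iff.mp ht with rfl | rfl
          exacts [hxv, h2]
      rw [Finset.card_sdiff_of_subset hsub, Finset.card_pair (pair_ne huw)]
      obtain ⟨m, hm⟩ := heven x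
      have h2le := Finset.card_le_card hsub
      rw [Finset.card_pair (pair_ne huw)] at h2le
      exact ⟨m - 1, by omega⟩
    · rw [compEdges_deleteEdges_of_not_reachable pair_mem_v hxv]
      exact heven x

lemma surgery_junction (huw : u ≠ w) (hadj_u : H.Adj v u) (hadj_w : H.Adj v w)
    (hnbrv : ∀ z, H.Adj v z → z = u ∨ z = w)
    (hΔ : ∀ z, H.degree z ≤ 2) (hno1 : ∀ z, H.degree z ≠ 1) :
    (H.deleteEdges {s(v,u), s(v,w)}).Reachable u w := by
  classical
  by_contra hcon
  set H' := H.deleteEdges {s(v,u), s(v,w)} with hH'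
  set S : Finset V := Finset.univ.filter (fun z => H'.Reachable u z) with hS
  have hSmem : ∀ z, z ∈ S ↔ H'.Reachable u z := by intro z; simp [hS]
  have hclosed : ∀ p ∈ S, ∀ q, H'.Adj p q → q ∈ S := by
    intro p hp q hpq
    rw [hSmem] at hp ⊢
    exact hp.trans hpq.reachable
  have hevenS := even_sum_degree_closed hclosed
  have huS : u ∈ S := (hSmem u).mpr (Reachable.refl u)
  have hvu : v ≠ u := hadj_u.ne
  have hvw : v ≠ w := hadj_w.ne
  have hdegu : H.degree u = 2 := by
    have h1 : 1 ≤ H.degree u :=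
      Finset.card_pos.mpr ⟨v, (mem_neighborFinset _ _ _).mpr hadj_u.symm⟩
    have h2 := hΔ u
    have h3 := hno1 u
    omega
  have hdegu' : H'.degree u = 1 := by
    show (H'.neighborFinset u).card = 1
    rw [surgery_nbrF_u hvu huw,
      Finset.card_erase_of_mem ((mem_neighborFinset _ _ _).mpr hadj_u.symm)]
    have hcard : (H.neighborFinset u).card = 2 := hdegu
    omega
  have hvS : v ∉ S := by
    intro hvS
    have hr := ((hSmem v).mp hvS).symm
    have := reachable_isolated (surgery_v_isolated hnbrv) hr
    exact hvu this.symm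
  have hwS : w ∉ S := fun hw => hcon ((hSmem w).mp hw)
  have hrest : ∀ z ∈ S, z ≠ u → H'.degree z = 2 := by
    intro z hz hzu
    have hzv : z ≠ v := fun e => hvS (e ▸ hz)
    have hzw : z ≠ w := fun e => hwS (e ▸ hz)
    have hnb : H'.neighborFinset z = H.neighborFinset z := surgery_nbrF_other hzv hzu hzw
    have h1 : 1 ≤ H'.degree z :=
      by convert one_le_degree_of_reachable ((hSmem z).mp hz).symm hzu
    have heq : H'.degree z = H.degree z := by
      show (H'.neighborFinset z).card = (H.neighborFinset z).card
      rw [hnb]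
    have h2 := hΔ z
    have h3 := hno1 z
    omega
  have hsum : ∑ p ∈ S, H'.degree p = H'.degree u + ∑ p ∈ S.erase u, H'.degree p :=
    (Finset.add_sum_erase S _ huS).symm
  rw [hsum, hdegu'] at hevenS
  have hconst : ∑ p ∈ S.erase u, H'.degree p = 2 * (S.erase u).card := by
    rw [Finset.sum_congr rfl
      (fun z hz => hrest z (Finset.mem_of_mem_erase hz) (Finset.ne_of_mem_erase hz))]
    rw [Finset.sum_const, smul_eq_mul, mul_comm]
  rw [hconst] at hevenS
  obtain ⟨m, hm⟩ := hevenS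
  omega

lemma surgery_assemble (huw : u ≠ w) (hadj_u : H.Adj v u) (hadj_w : H.Adj v w)
    (hnbrv : ∀ z, H.Adj v z → z = u ∨ z = w) (hdegv : H.degree v = 2)
    (hΔ : ∀ z, H.degree z ≤ 2) {J' : Finset V}
    (hJd : ∀ j ∈ J', (H.deleteEdges {s(v,u), s(v,w)}).degree j = 2)
    (hJx : ∀ x y, (H.deleteEdges {s(v,u), s(v,w)}).Adj x y → (x ∈ J' ↔ y ∉ J')) :
    ∃ J : Finset V, (∀ j ∈ J, H.degree j = 2) ∧ ∀ x y, H.Adj x y → (x ∈ J ↔ y ∉ J) := by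
  classical
  set H' := H.deleteEdges {s(v,u), s(v,w)} with hH'
  have hvu : v ≠ u := hadj_u.ne
  have hvw : v ≠ w := hadj_w.ne
  have hvdeg' : H'.degree v = 0 := by
    have hemp : H'.neighborFinset v = ∅ := by
      ext t
      simp only [mem_neighborFinset, Finset.notMem_empty, iff_false]
      exact surgery_v_isolated hnbrv t
    show (H'.neighborFinset v).card = 0
    rw [hemp]
    rfl
  have hvJ' : v ∉ J' := by
    intro h
    have h1 : H'.degree v = 2 := by convert hJd v h
    omega
  have huJ' : u ∉ J' := by
    intro h
    have h2 : H'.degree u = 2 := by convert hJd u h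
    have h3 : H'.degree u = H.degree u - 1 := by
      show (H'.neighborFinset u).card = _
      rw [surgery_nbrF_u hvu huw,
        Finset.card_erase_of_mem ((mem_neighborFinset _ _ _).mpr hadj_u.symm)]
      rfl
    have := hΔ u
    omega
  have hwJ' : w ∉ J' := by
    intro h
    have h2 : H'.degree w = 2 := by convert hJd w h
    have h3 : H'.degree w = H.degree w - 1 := by
      show (H'.neighborFinset w).card = _
      rw [surgery_nbrF_w hvw huw,
        Finset.card_erase_of_mem ((mem_neighborFinset _ _ _).mpr hadj_w.symm)]
      rfl
    have := hΔ w
    omega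
  refine ⟨insert v J', ?_, ?_⟩
  · intro j hj
    rcases Finset.mem_insert.mp hj with rfl | hj'
    · exact hdegv
    · have h2 : H'.degree j = 2 := by convert hJd j hj'
      have hle : H'.degree j ≤ H.degree j := by convert degree_le_of_le (H.deleteEdges_le _) j
      have := hΔ j
      omega
  · intro x y hxy
    by_cases hx : x = v
    · have hxy' : H.Adj v y := by rw [← hx]; exact hxy
      have hyJ : y ∉ insert v J' := by
        rw [Finset.mem_insert]
        rintro (rfl | hyJ')
        · exact H.irrefl hxy'
        · rcases hnbrv y hxy' with rfl | rfl
          exacts [huJ' hyJ', hwJ' hyJ']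
      rw [hx]
      simp [hyJ]
    · by_cases hy : y = v
      · have hxy' : H.Adj x v := by rw [← hy]; exact hxy
        have hxJ : x ∉ insert v J' := by
          rw [Finset.mem_insert]
          rintro (rfl | hxJ')
          · exact H.irrefl hxy'
          · rcases hnbrv x hxy'.symm with rfl | rfl
            exacts [huJ' hxJ', hwJ' hxJ']
        rw [hy]
        simp [hxJ]
      · have hH'adj : H'.Adj x y := by
          rw [hH', deleteEdges_adj]
          refine ⟨hxy, ?_⟩
          intro hmem
          rw [Set.mem_insert_iff, Set.mem_singleton_iff] at hmem
          rcases hmem with he | he <;> rw [Sym2.eq_iff] at he <;>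
            rcases he with ⟨h1, _⟩ | ⟨_, h2⟩
          · exact hx h1
          · exact hy h2
          · exact hx h1
          · exact hy h2
        have hiff := hJx x y hH'adj
        rw [Finset.mem_insert, Finset.mem_insert]
        constructor
        · rintro (rfl | hxJ)
          · exact absurd rfl hx
          · rintro (rfl | hyJ)
            exacts [hy rfl, (hiff.mp hxJ) hyJ]
        · intro hyn
          right
          apply hiff.mpr
          intro hyJ'
          exact hyn (Or.inr hyJ')


end Surgery

/-- The key existence lemma: a graph with maximum degree at most 2 all of whose
components have evenly many edges admits an independent exact cover by
degree-2 vertices. -/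
lemma exists_cover : ∀ (n : ℕ) (H : SimpleGraph V), H.edgeFinset.card ≤ n →
    (∀ v, H.degree v ≤ 2) → (∀ x, Even (compEdges H x).card) →
    ∃ J : Finset V, (∀ j ∈ J, H.degree j = 2) ∧
      ∀ x y, H.Adj x y → (x ∈ J ↔ y ∉ J) := by
  classical
  intro n
  induction n with
  | zero =>
    intro H hcard _ _
    refine ⟨∅, fun j hj => absurd hj (Finset.notMem_empty j), fun x y hxy => ?_⟩
    exfalso
    have hmem : s(x,y) ∈ H.edgeFinset := mem_edgeFinset.mpr hxy
    have := Finset.card_pos.mpr ⟨_, hmem⟩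
    omega
  | succ n ih =>
    intro H hcard hΔ heven
    by_cases hne : H.edgeFinset = ∅
    · refine ⟨∅, fun j hj => absurd hj (Finset.notMem_empty j), fun x y hxy => ?_⟩
      exfalso
      have hmem : s(x,y) ∈ H.edgeFinset := mem_edgeFinset.mpr hxy
      rw [hne] at hmem
      exact Finset.notMem_empty _ hmem
    by_cases hdeg1 : ∃ z, H.degree z = 1
    · -- pendant case
      obtain ⟨u, hu1⟩ := hdeg1
      obtain ⟨v, hv⟩ := Finset.card_eq_one.mp (hu1 : (H.neighborFinset u).card = 1)
      have hadj_uv : H.Adj u v := by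
        rw [← mem_neighborFinset, hv]
        exact Finset.mem_singleton_self v
      have hnbru : ∀ t, H.Adj u t → t = v := by
        intro t ht
        have : t ∈ H.neighborFinset u := (mem_neighborFinset _ _ _).mpr ht
        rwa [hv, Finset.mem_singleton] at this
      have hdegv : H.degree v = 2 := by
        have h1 : 1 ≤ H.degree v :=
          Finset.card_pos.mpr ⟨u, (mem_neighborFinset _ _ _).mpr hadj_uv.symm⟩
        have h2 := hΔ v
        by_contra hcon
        have hdv1 : H.degree v = 1 := by omega
        have hnbrv1 : H.neighborFinset v = {u} := by
          refine (Finset.eq_of_subset_of_card_le ?_ ?_).symm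
          · intro t ht
            rw [Finset.mem_singleton] at ht
            subst ht
            exact (mem_neighborFinset _ _ _).mpr hadj_uv.symm
          · have : (H.neighborFinset v).card = 1 := hdv1
            simp [this]
        have hconf := reach_pendant hv hnbrv1
        have hCE : compEdges H u = {s(u,v)} := by
          ext e
          induction e with
          | _ a b =>
            rw [mem_compEdges, Finset.mem_singleton]
            constructor
            · rintro ⟨he, hall⟩
              have hadj : H.Adj a b := he
              rcases hconf a (hall a (Sym2.mem_mk_left a b)) with rfl | rfl
              · rw [hnbru b hadj]
              · rw [Sym2.eq_swap]
                have : b ∈ H.neighborFinset a := (mem_neighborFinset _ _ _).mpr hadj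
                rw [hnbrv1, Finset.mem_singleton] at this
                rw [this]
            · intro he
              rw [he]
              refine ⟨(mem_edgeSet _).mpr hadj_uv, ?_⟩
              intro t ht
              rcases Sym2.mem_iff.mp ht with rfl | rfl
              · exact Reachable.refl _
              · exact hadj_uv.reachable
        have := heven u
        rw [hCE, Finset.card_singleton] at this
        obtain ⟨m, hm⟩ := this
        omega
      obtain ⟨w, hwu, hadj_vw, hnbrv⟩ := exists_other_nbr hdegv hadj_uv.symm
      have huw : u ≠ w := fun e => hwu (e.symm)
      have hBadedge : ∀ z ∈ ({u, v} : Finset V), ∀ t, H.Adj z t →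
          s(z,t) ∈ ({s(v,u), s(v,w)} : Set (Sym2 V)) := by
        intro z hz t ht
        rw [Finset.mem_insert, Finset.mem_singleton] at hz
        rcases hz with rfl | rfl
        · rw [hnbru t ht, Sym2.eq_swap]
          exact Set.mem_insert _ _
        · rcases hnbrv t ht with rfl | rfl
          · exact Set.mem_insert _ _
          · exact Set.mem_insert_of_mem _ rfl
      have hside : (H.deleteEdges {s(v,u), s(v,w)}).Reachable u w ∨
          (u ∈ ({u, v} : Finset V) ∧ ∀ t, H.Adj u t → t = v) :=
        Or.inr ⟨Finset.mem_insert_self _ _, hnbru⟩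
      have hvB : v ∈ ({u, v} : Finset V) := by simp
      have hcard2 := surgery_card (v := v) (u := u) (w := w) hadj_uv.symm hadj_vw huw
      have hΔ' : ∀ z, (H.deleteEdges {s(v,u), s(v,w)}).degree z ≤ 2 :=
        fun z => by convert Nat.le_trans (degree_le_of_le (H.deleteEdges_le {s(v,u), s(v,w)}) z) (hΔ z)
      have heven' := surgery_even huw hadj_uv.symm hadj_vw hnbrv hvB hBadedge hside heven
      obtain ⟨J', h1, h2⟩ := ih (H.deleteEdges {s(v,u), s(v,w)}) (by convert Nat.le_of_lt_succ (Nat.lt_of_lt_of_le (Nat.lt_add_of_pos_right Nat.zero_lt_two) (hcard2.trans_le hcard))) (by convert hΔ') heven'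
      exact surgery_assemble huw hadj_uv.symm hadj_vw hnbrv hdegv hΔ (by convert h1) h2
    · -- cycle case
      push_neg at hdeg1
      obtain ⟨e0, he0⟩ := Finset.nonempty_of_ne_empty hne
      have hex : ∃ p q : V, H.Adj p q := by
        revert he0
        induction e0 with
        | _ p q => exact fun h => ⟨p, q, mem_edgeFinset.mp h⟩
      obtain ⟨a, b, hab⟩ := hex
      have hdega : H.degree a = 2 := by
        have h1 : 1 ≤ H.degree a :=
          Finset.card_pos.mpr ⟨b, (mem_neighborFinset _ _ _).mpr hab⟩
        have h2 := hΔ a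
        have h3 := hdeg1 a
        omega
      obtain ⟨c, hcb, hadj_ac, hnbra⟩ := exists_other_nbr hdega hab
      have hbc : b ≠ c := fun e => hcb (e.symm)
      have hjoin := surgery_junction hbc hab hadj_ac hnbra hΔ hdeg1
      have hBadedge : ∀ z ∈ ({a} : Finset V), ∀ t, H.Adj z t →
          s(z,t) ∈ ({s(a,b), s(a,c)} : Set (Sym2 V)) := by
        intro z hz t ht
        rw [Finset.mem_singleton] at hz
        subst hz
        rcases hnbra t ht with rfl | rfl
        · exact Set.mem_insert _ _
        · exact Set.mem_insert_of_mem _ rfl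
      have hside : (H.deleteEdges {s(a,b), s(a,c)}).Reachable b c ∨
          (b ∈ ({a} : Finset V) ∧ ∀ t, H.Adj b t → t = a) := Or.inl hjoin
      have haB : a ∈ ({a} : Finset V) := Finset.mem_singleton_self a
      have hcard2 := surgery_card (v := a) (u := b) (w := c) hab hadj_ac hbc
      have hΔ' : ∀ z, (H.deleteEdges {s(a,b), s(a,c)}).degree z ≤ 2 :=
        fun z => by convert Nat.le_trans (degree_le_of_le (H.deleteEdges_le {s(a,b), s(a,c)}) z) (hΔ z)
      have heven' := surgery_even hbc hab hadj_ac hnbra haB hBadedge hside heven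
      obtain ⟨J', h1, h2⟩ := ih (H.deleteEdges {s(a,b), s(a,c)}) (by convert Nat.le_of_lt_succ (Nat.lt_of_lt_of_le (Nat.lt_add_of_pos_right Nat.zero_lt_two) (hcard2.trans_le hcard))) (by convert hΔ') heven'
      exact surgery_assemble hbc hab hadj_ac hnbra hdega hΔ (by convert h1) h2


/-- The spanning "tree" candidate built from a tree on `A` plus pendant edges from `J`. -/
def pendTree (G : SimpleGraph V) (A J : Finset V) (f : V → V) : SimpleGraph V where
  Adj x y := G.Adj x y ∧ ((x ∈ A ∧ y ∈ A) ∨ (x ∈ J ∧ y = f x) ∨ (y ∈ J ∧ x = f y))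
  symm := by
    constructor
    rintro x y ⟨hg, hc⟩
    exact ⟨hg.symm, by tauto⟩
  loopless := by
    constructor
    rintro x ⟨hg, _⟩
    exact G.irrefl hg

lemma mpr_direction (G : SimpleGraph V) [DecidableRel G.Adj]
    (hcubic : ∀ v, G.degree v = 3) (A J : Finset V) (hdisj : Disjoint A J)
    (hunion : A ∪ J = Finset.univ) (htree : (G.induce (↑A : Set V)).IsTree)
    (hind : ∀ u ∈ J, ∀ v ∈ J, ¬ G.Adj u v) :
    ∃ T : SimpleGraph V, T ≤ G ∧ T.IsTree ∧
      ∀ x, Even (compEdges (G \ T) x).card := by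
  classical
  have hAJ : ∀ z : V, z ∈ A ∨ z ∈ J := by
    intro z
    have : z ∈ A ∪ J := by rw [hunion]; exact Finset.mem_univ z
    exact Finset.mem_union.mp this
  have hJnA : ∀ j ∈ J, j ∉ A := fun j hj => Finset.disjoint_right.mp hdisj hj
  have hnbrJ : ∀ j ∈ J, ∀ y, G.Adj j y → y ∈ A := by
    intro j hj y hy
    rcases hAJ y with h | h
    · exact h
    · exact absurd hy (hind j hj y h)
  have hnonempty : ∀ z, (G.neighborFinset z).Nonempty := by
    intro z
    apply Finset.card_pos.mp
    have : (G.neighborFinset z).card = 3 := hcubic z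
    omega
  set f : V → V := fun z => (hnonempty z).choose with hfdef
  have hfadj : ∀ z, G.Adj z (f z) := by
    intro z
    have := (hnonempty z).choose_spec
    rw [mem_neighborFinset] at this
    exact this
  have hfA : ∀ j ∈ J, f j ∈ A := fun j hj => hnbrJ j hj (f j) (hfadj j)
  set T := pendTree G A J f with hT
  have hTG : T ≤ G := by
    intro x y h
    exact h.1
  have hTJ : ∀ j ∈ J, ∀ y, (T.Adj j y ↔ y = f j) := by
    intro j hj y
    constructor
    · rintro ⟨hg, ⟨hjA, _⟩ | ⟨_, rfl⟩ | ⟨hyJ, hjf⟩⟩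
      · exact absurd hjA (hJnA j hj)
      · rfl
      · exact absurd (hjf ▸ hfA y hyJ) (hJnA j hj)
    · rintro rfl
      exact ⟨hfadj j, Or.inr (Or.inl ⟨hj, rfl⟩)⟩
  have hTA : ∀ x ∈ A, ∀ y ∈ A, (T.Adj x y ↔ G.Adj x y) := by
    intro x hx y hy
    exact ⟨fun h => h.1, fun h => ⟨h, Or.inl ⟨hx, hy⟩⟩⟩
  -- connectivity of T
  obtain ⟨a0⟩ := htree.isConnected.nonempty
  have ha0 : (a0 : V) ∈ A := a0.2
  have reachA : ∀ x y, x ∈ A → y ∈ A → T.Reachable x y := by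
    intro x y hx hy
    have r := htree.isConnected.preconnected ⟨x, hx⟩ ⟨y, hy⟩
    refine r.map (⟨Subtype.val, ?_⟩ : G.induce (↑A : Set V) →g T)
    intro p q h
    exact ⟨h, Or.inl ⟨p.2, q.2⟩⟩
  have reach_to_A : ∀ z : V, ∃ a ∈ A, T.Reachable z a := by
    intro z
    rcases hAJ z with h | h
    · exact ⟨z, h, Reachable.refl z⟩
    · exact ⟨f z, hfA z h, ((hTJ z h (f z)).mpr rfl).reachable⟩
  have hTconn : T.Connected := by
    rw [connected_iff]
    refine ⟨?_, ⟨(a0 : V)⟩⟩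
    intro x y
    obtain ⟨ax, hax, rx⟩ := reach_to_A x
    obtain ⟨ay, hay, ry⟩ := reach_to_A y
    exact (rx.trans (reachA ax ay hax hay)).trans ry.symm
  -- acyclicity of T
  have hTacyclic : T.IsAcyclic := by
    intro v c hc
    have hsupp : ∀ z ∈ c.support, z ∈ (↑A : Set V) := by
      intro z hz
      rcases hAJ z with h | h
      · exact h
      · exfalso
        have h2 := two_le_degree_of_mem_cycle hc hz
        have h1 : T.neighborFinset z = {f z} := by
          ext t
          rw [mem_neighborFinset, Finset.mem_singleton]
          exact hTJ z h t
        have : T.degree z = 1 := by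
          show (T.neighborFinset z).card = 1
          rw [h1]
          rfl
        omega
    have hedge : ∀ e ∈ c.edges, e ∈ G.edgeSet :=
      fun e he => edgeSet_mono hTG (c.edges_subset_edgeSet he)
    have hc' : (c.transfer G hedge).IsCycle := hc.transfer hedge
    have hsupp' : ∀ z ∈ (c.transfer G hedge).support, z ∈ (↑A : Set V) := by
      rw [Walk.support_transfer]
      exact hsupp
    have hvA : v ∈ (↑A : Set V) := hsupp v c.start_mem_support
    obtain ⟨q, hq⟩ := exists_lift_walk (c.transfer G hedge) hsupp' hvA hvA
    have hqc : q.IsCycle := by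
      have hinj : Function.Injective (inducedHom G (↑A : Set V)) := Subtype.val_injective
      rw [← Walk.map_isCycle_iff_of_injective hinj]
      exact hq ▸ hc'
    exact htree.IsAcyclic q hqc
  -- the cotree
  have hHdegJ : ∀ j ∈ J, (G \ T).degree j = 2 := by
    intro j hj
    have hnb : (G \ T).neighborFinset j = (G.neighborFinset j).erase (f j) := by
      ext t
      rw [mem_neighborFinset, Finset.mem_erase, mem_neighborFinset, sdiff_adj]
      constructor
      · rintro ⟨hg, hnT⟩
        refine ⟨?_, hg⟩
        rintro rfl
        exact hnT ((hTJ j hj (f j)).mpr rfl)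
      · rintro ⟨hne, hg⟩
        exact ⟨hg, fun hT => hne ((hTJ j hj t).mp hT)⟩
    show ((G \ T).neighborFinset j).card = 2
    rw [hnb, Finset.card_erase_of_mem ((mem_neighborFinset _ _ _).mpr (hfadj j))]
    have : (G.neighborFinset j).card = 3 := hcubic j
    omega
  have hHxor : ∀ x y, (G \ T).Adj x y → (x ∈ J ↔ y ∉ J) := by
    intro x y hxy
    rw [sdiff_adj] at hxy
    obtain ⟨hg, hnT⟩ := hxy
    constructor
    · intro hx hy
      exact hind x hx y hy hg
    · intro hy
      rcases hAJ x with hx | hx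
      · exfalso
        rcases hAJ y with hy' | hy'
        · exact hnT ((hTA x hx y hy').mpr hg)
        · exact hy hy'
      · exact hx
  exact ⟨T, hTG, ⟨hTconn, hTacyclic⟩, even_of_cover hHdegJ hHxor⟩


lemma mp_direction (G : SimpleGraph V) [DecidableRel G.Adj] (hconn : G.Connected)
    (hcubic : ∀ v, G.degree v = 3) (T : SimpleGraph V) (hTG : T ≤ G) (htree : T.IsTree)
    (heven : ∀ x, Even (compEdges (G \ T) x).card) :
    ∃ A J : Finset V, Disjoint A J ∧ A ∪ J = Finset.univ ∧
      (G.induce (↑A : Set V)).IsTree ∧ ∀ u ∈ J, ∀ v ∈ J, ¬ G.Adj u v := by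
  classical
  letI instC : DecidableRel (G \ T).Adj := fun a b => Classical.propDecidable _
  obtain ⟨v0⟩ := hconn.nonempty
  have n4 : 3 < Fintype.card V := by
    have := G.degree_lt_card_verts v0
    rw [hcubic v0] at this
    exact this
  have hT1 : ∀ v, 1 ≤ T.degree v := by
    intro v
    obtain ⟨w, hw⟩ := Fintype.exists_ne_of_one_lt_card (by omega) v
    exact one_le_degree_of_reachable (htree.isConnected.preconnected v w) (fun e => hw e.symm)
  have hTsub : ∀ v, T.neighborFinset v ⊆ G.neighborFinset v := by
    intro v t ht
    rw [mem_neighborFinset] at ht ⊢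
    exact hTG ht
  have hnbrH : ∀ v, (G \ T).neighborFinset v = G.neighborFinset v \ T.neighborFinset v := by
    intro v
    ext t
    rw [mem_neighborFinset, Finset.mem_sdiff, mem_neighborFinset, mem_neighborFinset, sdiff_adj]
  have hHdeg : ∀ v, (G \ T).degree v + T.degree v = 3 := by
    intro v
    have hc3 : (G.neighborFinset v).card = 3 := hcubic v
    have hle := Finset.card_le_card (hTsub v)
    have hsd := Finset.card_sdiff_of_subset (hTsub v)
    have : ((G \ T).neighborFinset v).card = (G.neighborFinset v \ T.neighborFinset v).card := by
      rw [hnbrH v]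
    show ((G \ T).neighborFinset v).card + (T.neighborFinset v).card = 3
    omega
  have hΔ : ∀ v, (G \ T).degree v ≤ 2 := by
    intro v
    have := hHdeg v
    have := hT1 v
    omega
  obtain ⟨J, hJdeg, hJxor⟩ := exists_cover (Finset.univ : Finset (Sym2 V)).card (G \ T) (Finset.card_le_univ _) hΔ heven
  have hTdeg1 : ∀ j ∈ J, T.degree j = 1 := by
    intro j hj
    have := hHdeg j
    have := hJdeg j hj
    omega
  have hNoTJJ : ∀ x ∈ J, ∀ y ∈ J, ¬ T.Adj x y := by
    intro x hx y hy hT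
    have hTx : T.neighborFinset x = {y} := by
      refine (Finset.eq_of_subset_of_card_le ?_ ?_).symm
      · intro t ht
        rw [Finset.mem_singleton] at ht
        subst ht
        exact (mem_neighborFinset _ _ _).mpr hT
      · have h1 : (T.neighborFinset x).card = 1 := hTdeg1 x hx
        simp [h1]
    have hTy : T.neighborFinset y = {x} := by
      refine (Finset.eq_of_subset_of_card_le ?_ ?_).symm
      · intro t ht
        rw [Finset.mem_singleton] at ht
        subst ht
        exact (mem_neighborFinset _ _ _).mpr hT.symm
      · have h1 : (T.neighborFinset y).card = 1 := hTdeg1 y hy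
        simp [h1]
    have hsub : (Finset.univ : Finset V) ⊆ {x, y} := by
      intro z _
      rcases reach_pendant hTx hTy z (htree.isConnected.preconnected x z) with rfl | rfl
      · exact Finset.mem_insert_self _ _
      · exact Finset.mem_insert_of_mem (Finset.mem_singleton_self _)
    have := Finset.card_le_card hsub
    rw [Finset.card_univ] at this
    have hxy2 : ({x, y} : Finset V).card ≤ 2 := Finset.card_insert_le _ _ |>.trans (by simp)
    omega
  have hind : ∀ u ∈ J, ∀ v ∈ J, ¬ G.Adj u v := by
    intro u hu v hv hG
    by_cases hT : T.Adj u v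
    · exact hNoTJJ u hu v hv hT
    · have hH : (G \ T).Adj u v := by rw [sdiff_adj]; exact ⟨hG, hT⟩
      exact (hJxor u v hH).mp hu hv
  have hGT_A : ∀ x y, x ∉ J → y ∉ J → (G.Adj x y ↔ T.Adj x y) := by
    intro x y hx hy
    constructor
    · intro hG
      by_cases hT : T.Adj x y
      · exact hT
      · exfalso
        have hH : (G \ T).Adj x y := by rw [sdiff_adj]; exact ⟨hG, hT⟩
        exact hx ((hJxor x y hH).mpr hy)
    · exact fun h => hTG h
  have hmemA : ∀ z : V, z ∈ Jᶜ ↔ z ∉ J := fun z => Finset.mem_compl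
  have hAne : (Jᶜ : Finset V).Nonempty := by
    rw [Finset.nonempty_iff_ne_empty]
    intro hemp
    have hallJ : ∀ z : V, z ∈ J := by
      intro z
      by_contra hz
      have : z ∈ (Jᶜ : Finset V) := (hmemA z).mpr hz
      rw [hemp] at this
      exact Finset.notMem_empty _ this
    obtain ⟨w0, hw0⟩ := Finset.card_pos.mp (lt_of_lt_of_le Nat.zero_lt_one (hT1 v0))
    rw [mem_neighborFinset] at hw0
    exact hNoTJJ v0 (hallJ v0) w0 (hallJ w0) hw0
  obtain ⟨a0, ha0⟩ := hAne
  have ha0' : (a0 : V) ∈ (↑(Jᶜ : Finset V) : Set V) := by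
    rw [Finset.mem_coe]
    exact ha0
  have htreeA : (G.induce (↑(Jᶜ : Finset V) : Set V)).IsTree := by
    constructor
    · rw [connected_iff]
      refine ⟨?_, ⟨⟨a0, ha0'⟩⟩⟩
      rintro ⟨x, hx⟩ ⟨y, hy⟩
      have hxJ : x ∉ J := by rwa [Finset.mem_coe, hmemA] at hx
      have hyJ : y ∉ J := by rwa [Finset.mem_coe, hmemA] at hy
      obtain ⟨p0⟩ := htree.isConnected.preconnected x y
      obtain ⟨p, hp⟩ := p0.toPath
      have hsupp : ∀ z ∈ p.support, z ∈ (↑(Jᶜ : Finset V) : Set V) := by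
        intro z hz
        rw [Finset.mem_coe, hmemA]
        intro hzJ
        have hz1 := hTdeg1 z hzJ
        by_cases hzx : z = x
        · exact hxJ (hzx ▸ hzJ)
        · by_cases hzy : z = y
          · exact hyJ (hzy ▸ hzJ)
          · have := two_le_degree_of_internal p hp z hz hzx hzy
            omega
      have hedge : ∀ e ∈ p.edges, e ∈ G.edgeSet :=
        fun e he => edgeSet_mono hTG (p.edges_subset_edgeSet he)
      have hsupp' : ∀ z ∈ (p.transfer G hedge).support, z ∈ (↑(Jᶜ : Finset V) : Set V) := by
        rw [Walk.support_transfer]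
        exact hsupp
      obtain ⟨q, _⟩ := exists_lift_walk (p.transfer G hedge) hsupp' hx hy
      exact ⟨q⟩
    · intro w q hq
      have hinj : Function.Injective (inducedHom G (↑(Jᶜ : Finset V) : Set V)) :=
        Subtype.val_injective
      have hqG : (q.map (inducedHom G (↑(Jᶜ : Finset V) : Set V))).IsCycle := hq.map hinj
      set cG := q.map (inducedHom G (↑(Jᶜ : Finset V) : Set V)) with hcG
      have hsupp : ∀ z ∈ cG.support, z ∉ J := by
        intro z hz
        rw [hcG, Walk.support_map, List.mem_map] at hz
        obtain ⟨⟨z', hz'⟩, _, rfl⟩ := hz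
        rwa [Finset.mem_coe, hmemA] at hz'
      have hedgeT : ∀ e ∈ cG.edges, e ∈ T.edgeSet := by
        intro e he
        have heG : e ∈ G.edgeSet := cG.edges_subset_edgeSet he
        revert heG
        induction e with
        | _ a b =>
          intro heG
          rw [mem_edgeSet] at heG ⊢
          have haJ : a ∉ J := hsupp a (cG.fst_mem_support_of_mem_edges he)
          have hbJ : b ∉ J := hsupp b (cG.snd_mem_support_of_mem_edges he)
          exact (hGT_A a b haJ hbJ).mp heG
      exact htree.IsAcyclic _ ((hqG.transfer hedgeT))
  refine ⟨Jᶜ, J, ?_, ?_, htreeA, hind⟩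
  · exact disjoint_compl_left
  · ext z
    simp [Finset.mem_union, Finset.mem_compl, em, or_comm]

end CubicAux

open CubicAux

/-- A connected cubic graph has a spanning tree all of whose cotree components are even
iff its vertex set can be partitioned into `A` inducing a tree and an independent set `J`. -/
theorem stmt6 {V : Type*} [Fintype V] [DecidableEq V] (G : SimpleGraph V)
    [DecidableRel G.Adj] (hconn : G.Connected) (hcubic : ∀ v, G.degree v = 3) :
    (∃ T : SimpleGraph V, T ≤ G ∧ T.IsTree ∧
        ∀ c : (G \ T).ConnectedComponent, Even ((cotreeCompEdges (G \ T) c).ncard)) ↔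
    (∃ A J : Finset V, Disjoint A J ∧ A ∪ J = Finset.univ ∧
        (G.induce (↑A : Set V)).IsTree ∧ ∀ u ∈ J, ∀ v ∈ J, ¬ G.Adj u v) := by
  constructor
  · rintro ⟨T, hTG, htree, heven⟩
    exact mp_direction G hconn hcubic T hTG htree ((even_iff_even _).mp heven)
  · rintro ⟨A, J, hdisj, hunion, htree, hind⟩
    obtain ⟨T, hTG, hT, h⟩ := mpr_direction G hcubic A J hdisj hunion htree hind
    exact ⟨T, hTG, hT, (even_iff_even _).mpr h⟩
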